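/- Let U be a unary update procedure and define s₀ = λx.0 and s_{i+1} = s_i ⊕ U(s_i). Then the learning process generated by U terminates: there exists k ∈ ℕ with U(s_k) = ∅; in particular s_k is a zero of U with finite support. -/
import Mathlib


/-- Controlled update of a single function: `(f ⊕ (n,m)) x = m` if `x = n`,
`f x` otherwise; `f ⊕ ∅ = f`. -/
def oplus1 (f : ℕ → ℕ) : Option (ℕ × ℕ) → ℕ → ℕ
  | none => f
  | some (n, m) => fun x => if x = n then m else f x

/-- The learning process generated by a unary update procedure `U`:
`s 0 = λx.0`, `s (i+1) = s i ⊕ U (s i)`. -/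
def learnProc1 (U : (ℕ → ℕ) → Option (ℕ × ℕ)) : ℕ → ℕ → ℕ
  | 0 => fun _ => 0
  | i + 1 => oplus1 (learnProc1 U i) (U (learnProc1 U i))

/-- The learning process generated by a unary update procedure terminates:
there is `k` with `U (s k) = ∅`; in particular `s k` is a zero of `U` with
finite support. -/
theorem termination_unary_learning_process (U : (ℕ → ℕ) → Option (ℕ × ℕ))
    -- continuity
    (hcont : ∀ f : ℕ → ℕ, ∃ A : Finset ℕ,
      ∀ g : ℕ → ℕ, (∀ n ∈ A, g n = f n) → U g = U f)
    -- update condition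
    (hupd : ∀ (f g : ℕ → ℕ) (n m h l : ℕ),
      U f = some (n, m) → g n = m → U g = some (h, l) → h ≠ n) :
    ∃ k : ℕ, U (learnProc1 U k) = none ∧
      Set.Finite {n : ℕ | learnProc1 U k n ≠ 0} := by
  classical
  set s := learnProc1 U with hs
  -- every stage has finite support
  have hfin : ∀ k, Set.Finite {n : ℕ | s k n ≠ 0} := by
    intro k
    induction k with
    | zero => simp [hs, learnProc1]
    | succ k ih =>
      have hsucc : s (k + 1) = oplus1 (s k) (U (s k)) := rfl
      cases hU : U (s k) with
      | none => rw [hsucc, hU]; exact ih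
      | some p =>
        obtain ⟨n, m⟩ := p
        apply Set.Finite.subset (ih.union (Set.finite_singleton n))
        intro x hx
        rw [hsucc, hU] at hx
        simp only [oplus1, Set.mem_setOf_eq] at hx
        by_cases hxn : x = n
        · right; simp [hxn]
        · left; simpa [hxn] using hx
  by_contra hcon
  push_neg at hcon
  have hne : ∀ k, U (s k) ≠ none := fun k h => hcon k h (hfin k)
  -- once updated at n to value m, the value at n stays m
  have hstep : ∀ k n m, U (s k) = some (n, m) → ∀ j, k < j → s j n = m := by
    intro k n m hU j hj
    induction j with
    | zero => omega
    | succ j ih =>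
      have hsucc : s (j + 1) = oplus1 (s j) (U (s j)) := rfl
      rcases Nat.lt_succ_iff_lt_or_eq.mp hj with h | h
      · have hsj := ih h
        cases hU' : U (s j) with
        | none => rw [hsucc, hU']; exact hsj
        | some p =>
          obtain ⟨h', l⟩ := p
          have hne' : h' ≠ n := hupd (s k) (s j) n m h' l hU hsj hU'
          rw [hsucc, hU']
          simp only [oplus1]
          rw [if_neg (fun hnh => hne' hnh.symm)]
          exact hsj
      · subst h
        rw [hsucc, hU]
        simp [oplus1]
  -- pointwise stabilization
  have hstab : ∀ x, ∃ N, ∀ j, N ≤ j → s j x = s N x := by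
    intro x
    by_cases hx : ∃ k m, U (s k) = some (x, m)
    · obtain ⟨k, m, hk⟩ := hx
      refine ⟨k + 1, fun j hj => ?_⟩
      rw [hstep k x m hk j (by omega), hstep k x m hk (k + 1) (by omega)]
    · push_neg at hx
      have hz : ∀ j, s j x = 0 := by
        intro j
        induction j with
        | zero => rfl
        | succ j ih =>
          have hsucc : s (j + 1) = oplus1 (s j) (U (s j)) := rfl
          cases hU : U (s j) with
          | none => rw [hsucc, hU]; exact ih
          | some p =>
            obtain ⟨n, m⟩ := p
            rw [hsucc, hU]
            simp only [oplus1]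
            have hxn : x ≠ n := by
              intro h; subst h; exact hx j m hU
            rw [if_neg hxn]
            exact ih
      exact ⟨0, fun j _ => by rw [hz j, hz 0]⟩
  choose N hN using hstab
  obtain ⟨A, hA⟩ := hcont (fun x => s (N x) x)
  set M := A.sup N with hM
  have hUM : ∀ j, M ≤ j → U (s j) = U (fun x => s (N x) x) := by
    intro j hj
    apply hA
    intro x hx
    exact hN x j (le_trans (Finset.le_sup hx) hj)
  cases hU : U (fun x => s (N x) x) with
  | none => exact hne M ((hUM M le_rfl).trans hU)
  | some p =>
    obtain ⟨n, m⟩ := p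
    have h1 : U (s M) = some (n, m) := (hUM M le_rfl).trans hU
    have h2 : U (s (M + 1)) = some (n, m) := (hUM (M + 1) (by omega)).trans hU
    have h3 : s (M + 1) n = m := hstep M n m h1 (M + 1) (by omega)
    exact hupd (s M) (s (M + 1)) n m n m h1 h3 h2 rfl
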